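/- For A ∈ ℝ^{m×n} with m = m₁m₂, n = n₁n₂, and for any B ∈ ℝ^{m₁×n₁}, C ∈ ℝ^{m₂×n₂}, the Frobenius-norm identity ‖A − B ⊗ C‖_F = ‖𝓡(A) − vec(B) vec(C)ᵀ‖_F holds, where 𝓡 is the rearrangement (permuted-matrix) operator. -/

import Mathlib

open Matrix
open scoped Kronecker BigOperators

/-- The Frobenius norm of a real matrix. -/
noncomputable def frobNorm {α β : Type*} [Fintype α] [Fintype β]
    (M : Matrix α β ℝ) : ℝ :=
  Real.sqrt (∑ i, ∑ j, (M i j) ^ 2)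

/-- The `vec` operator stacking the columns of a matrix into a single vector. -/
def vecOf {m n : ℕ} (B : Matrix (Fin m) (Fin n) ℝ) : Fin m × Fin n → ℝ :=
  fun p => B p.1 p.2

/-- The Van Loan–Pitsianis rearrangement operator `𝓡`: with `A` partitioned into
`m₂ × n₂` blocks `A_{ij}`, the rows of `𝓡(A)` are the vectors `vec(A_{ij})ᵀ`. -/
def rearrange {m₁ m₂ n₁ n₂ : ℕ}
    (A : Matrix (Fin m₁ × Fin m₂) (Fin n₁ × Fin n₂) ℝ) :
    Matrix (Fin m₁ × Fin n₁) (Fin m₂ × Fin n₂) ℝ :=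
  fun p q => A (p.1, q.1) (p.2, q.2)

/-- Van Loan–Pitsianis rearrangement theorem:
`‖A − B ⊗ C‖_F = ‖𝓡(A) − vec(B) vec(C)ᵀ‖_F`. -/
theorem rearrangement_frobNorm {m₁ m₂ n₁ n₂ : ℕ}
    (A : Matrix (Fin m₁ × Fin m₂) (Fin n₁ × Fin n₂) ℝ)
    (B : Matrix (Fin m₁) (Fin n₁) ℝ) (C : Matrix (Fin m₂) (Fin n₂) ℝ) :
    frobNorm (A - B ⊗ₖ C) =
      frobNorm (rearrange A - Matrix.vecMulVec (vecOf B) (vecOf C)) := by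
  unfold frobNorm
  congr 1
  simp only [Fintype.sum_prod_type, Matrix.sub_apply, kroneckerMap_apply, rearrange,
    vecMulVec_apply, vecOf]
  exact Finset.sum_congr rfl fun i _ => Finset.sum_comm
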